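/- Let G(T) = ⋃_{u ∈ S(T)} f(u) ⊆ F_∞ for a tree T on {a,b}, where S is the outlining map into trees on {a,b,c,d} and f is the recursive set-valued encoding. Then for every w ∈ {a,b}^{<ℕ} and every nonempty tree T: G(T) ∩ x_w^{-1}G(T) = w·G(T_w), and hence w^{-1}G(T) ∩ (x_w w)^{-1}G(T) = G(T_w). -/

import Mathlib

/-- Generators of `F_∞`: the four letters `a,b,c,d` (as `Fin 4`) together with a
generator `x_w` for each nonempty word `w ∈ {a,b,c,d}^{<ℕ}`. -/
abbrev FGen := Fin 4 ⊕ {w : List (Fin 4) // w ≠ []}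

/-- The image of a word `w ∈ {a,b,c,d}^{<ℕ}` in the free group `F_∞`. -/
def wordEmb (w : List (Fin 4)) : FreeGroup FGen :=
  (w.map (fun i => FreeGroup.of (Sum.inl i))).prod

/-- The generator `x_w` for a nonempty word `w`. -/
def xGen (w : List (Fin 4)) (h : w ≠ []) : FreeGroup FGen :=
  FreeGroup.of (Sum.inr ⟨w, h⟩)

/-- Fuel-based version of the recursive definition of `f`. -/
def fencAux : ℕ → List (Fin 4) → Set (FreeGroup FGen)
  | 0, w => if w = [] then {1} else ∅
  | n + 1, w =>
    if hw : w = [] then {1}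
    else if w.length = 1 then {wordEmb w, xGen w hw * wordEmb w}
    else
      {g | ∃ s t : List (Fin 4), s ≠ [] ∧ t ≠ [] ∧ w = s ++ t ∧
          ∃ p ∈ fencAux n s, ∃ q ∈ fencAux n t, g = p * q} ∪
        {xGen w hw * wordEmb w}

/-- The recursively defined encoding `f : {a,b,c,d}^{<ℕ} → 𝒫(F_∞)`:
`f(e) = {e}`, `f(z) = {z, x_z z}` for letters `z`, and
`f(w) = (⋃_{w = s⌢t, s,t ≠ e} f(s)f(t)) ∪ {x_w w}` for longer words. -/
def fenc (w : List (Fin 4)) : Set (FreeGroup FGen) :=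
  fencAux w.length w


/-- Inclusion of `{a,b}^{<ℕ}` into `{a,b,c,d}^{<ℕ}`. -/
def abIncl : List (Fin 2) → List (Fin 4) :=
  List.map (Fin.castLE (by omega))

/-- The outlining map `S(T) = T ∪ t_a(T)⌢c ∪ t_b(T)⌢d`. -/
def outline (T : Set (List (Fin 2))) : Set (List (Fin 4)) :=
  (abIncl '' T) ∪
  {s | ∃ w ∈ T, w ++ [0] ∉ T ∧ s = abIncl w ++ [2]} ∪
  {s | ∃ w ∈ T, w ++ [1] ∉ T ∧ s = abIncl w ++ [3]}

/-- `G(T) = ⋃_{u ∈ S(T)} f(u) ⊆ F_∞`. -/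
def GTset (T : Set (List (Fin 2))) : Set (FreeGroup FGen) :=
  ⋃ u ∈ outline T, fenc u

def emb (L : List FGen) : FreeGroup FGen := FreeGroup.mk (L.map (·, true))

lemma emb_nil : emb [] = 1 := by simp [emb, ← FreeGroup.one_eq_mk]

lemma emb_append (L M : List FGen) : emb (L ++ M) = emb L * emb M := by
  simp [emb, FreeGroup.mul_mk]

lemma of_eq_emb (x : FGen) : FreeGroup.of x = emb [x] := rfl

lemma emb_cons (x : FGen) (L : List FGen) :
    emb (x :: L) = FreeGroup.of x * emb L := by
  rw [of_eq_emb, ← emb_append]; rfl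

lemma reduce_pos (L : List (FGen × Bool)) (h : ∀ p ∈ L, p.2 = true) :
    FreeGroup.reduce L = L := by
  induction L with
  | nil => rfl
  | cons x L ih =>
    have hx : x.2 = true := h x (by simp)
    have hL := ih (fun p hp => h p (by simp [hp]))
    rw [FreeGroup.reduce.cons, hL]
    cases L with
    | nil => rfl
    | cons y M =>
      have hy : y.2 = true := h y (by simp)
      simp [hx, hy]

lemma emb_injective : Function.Injective emb := by
  intro L M h
  have := FreeGroup.toWord_injective.eq_iff.2 h
  rw [emb, emb, FreeGroup.toWord_mk, FreeGroup.toWord_mk,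
    reduce_pos _ (by simp), reduce_pos _ (by simp)] at this
  exact List.map_injective_iff.2 (fun a b hab => by
    simpa using congrArg Prod.fst hab) this

lemma wordEmb_eq (u : List (Fin 4)) : wordEmb u = emb (u.map Sum.inl) := by
  induction u with
  | nil => simp [wordEmb, emb_nil]
  | cons z u ih => rw [wordEmb] at ih ⊢; simp only [List.map_cons, List.prod_cons, ih, emb_cons]

inductive Spell : List (Fin 4) → List FGen → Prop
  | nil : Spell [] []
  | letter (z : Fin 4) {t L} : Spell t L → Spell (z :: t) (Sum.inl z :: L)
  | block (s : List (Fin 4)) (hs : s ≠ []) {t L} : Spell t L →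
      Spell (s ++ t) (Sum.inr ⟨s, hs⟩ :: (s.map Sum.inl ++ L))

lemma spell_cases {u : List (Fin 4)} {L} (h : Spell u L) :
    (u = [] ∧ L = []) ∨
    (∃ z t L', u = z :: t ∧ L = Sum.inl z :: L' ∧ Spell t L') ∨
    (∃ s hs t L', u = s ++ t ∧ L = Sum.inr ⟨s, hs⟩ :: (s.map Sum.inl ++ L') ∧ Spell t L') := by
  cases h with
  | nil => left; exact ⟨rfl, rfl⟩
  | letter z h => right; left; exact ⟨_, _, _, rfl, rfl, h⟩
  | block s hs h => right; right; exact ⟨_, _, _, _, rfl, rfl, h⟩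

lemma spell_nil_eq {L} (h : Spell [] L) : L = [] := by
  rcases spell_cases h with ⟨_, rfl⟩ | ⟨z, t, L', h1, _, _⟩ | ⟨s, hs, t, L', h1, _, _⟩
  · rfl
  · simp at h1
  · exact absurd (List.append_eq_nil_iff.1 h1.symm).1 hs

lemma spell_append {s t L M} (hs : Spell s L) (ht : Spell t M) :
    Spell (s ++ t) (L ++ M) := by
  induction hs with
  | nil => simpa
  | letter z h ih => exact Spell.letter z ih
  | block s hs h ih =>
    rw [List.append_assoc, List.cons_append, List.append_assoc]
    exact Spell.block s hs ih

lemma spell_word {t M} (r : List (Fin 4)) (h : Spell t M) :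
    Spell (r ++ t) (r.map Sum.inl ++ M) := by
  induction r with
  | nil => simpa
  | cons z r ih => exact Spell.letter z ih

lemma xword_eq (s : List (Fin 4)) (hs : s ≠ []) (M : List FGen) :
    emb (Sum.inr ⟨s, hs⟩ :: (s.map Sum.inl ++ M)) = xGen s hs * wordEmb s * emb M := by
  rw [emb_cons, emb_append, ← wordEmb_eq, xGen, mul_assoc]

lemma xword_eq' (s : List (Fin 4)) (hs : s ≠ []) :
    emb (Sum.inr ⟨s, hs⟩ :: s.map Sum.inl) = xGen s hs * wordEmb s := by
  rw [emb_cons, ← wordEmb_eq]; rfl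

lemma xGen_congr {s t : List (Fin 4)} (h : s = t) {hs : s ≠ []} {ht : t ≠ []} :
    xGen s hs = xGen t ht := by subst h; rfl

def Sset (w : List (Fin 4)) : Set (FreeGroup FGen) := {g | ∃ L, Spell w L ∧ g = emb L}

lemma mem_Sset_x (s : List (Fin 4)) (hs : s ≠ []) : xGen s hs * wordEmb s ∈ Sset s := by
  refine ⟨Sum.inr ⟨s, hs⟩ :: (s.map Sum.inl ++ []), ?_, ?_⟩
  · have := Spell.block s hs Spell.nil
    rwa [List.append_nil] at this
  · rw [xword_eq, emb_nil, mul_one]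

lemma mem_Sset_word (s : List (Fin 4)) : wordEmb s ∈ Sset s :=
  ⟨s.map Sum.inl, by have := spell_word s Spell.nil; simpa using this, wordEmb_eq s⟩

lemma fencAux_eq_Sset : ∀ n, ∀ w : List (Fin 4), w.length ≤ n → fencAux n w = Sset w := by
  intro n
  induction n using Nat.strong_induction_on with
  | _ n ih =>
  intro w hwn
  have hnilcase : fencAux n [] = Sset [] ∨ True := Or.inr trivial
  rcases n with _ | m
  · have hw : w = [] := by cases w <;> simp_all
    subst hw
    ext g
    constructor
    · intro hg
      have : g = 1 := by simpa [fencAux] using hg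
      subst this; exact ⟨[], Spell.nil, emb_nil.symm⟩
    · rintro ⟨L, hL, rfl⟩
      rw [spell_nil_eq hL, emb_nil]
      simp [fencAux]
  by_cases hw0 : w = []
  · subst hw0
    ext g
    constructor
    · intro hg
      have : g = 1 := by simpa [fencAux] using hg
      subst this; exact ⟨[], Spell.nil, emb_nil.symm⟩
    · rintro ⟨L, hL, rfl⟩
      rw [spell_nil_eq hL, emb_nil]
      simp [fencAux]
  by_cases hw1 : w.length = 1
  · obtain ⟨z, rfl⟩ := List.length_eq_one_iff.1 hw1
    ext g
    simp only [fencAux, dif_neg hw0, if_pos hw1, Set.mem_insert_iff, Set.mem_singleton_iff,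
      Sset, Set.mem_setOf_eq]
    constructor
    · rintro (rfl | rfl)
      · exact mem_Sset_word [z]
      · exact mem_Sset_x [z] hw0
    · rintro ⟨L, hL, rfl⟩
      rcases spell_cases hL with ⟨h1, _⟩ | ⟨z', t, L', h1, rfl, hL'⟩ | ⟨s, hs, t, L', h1, rfl, hL'⟩
      · simp at h1
      · obtain ⟨rfl, rfl⟩ : z' = z ∧ t = [] := by simpa using h1.symm
        rw [spell_nil_eq hL']
        left; rw [wordEmb_eq]; rfl
      · rcases s with _ | ⟨a, s'⟩
        · exact absurd rfl hs
        · obtain ⟨rfl, h2⟩ : a = z ∧ s' ++ t = [] := by simpa using h1.symm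
          obtain ⟨rfl, rfl⟩ := List.append_eq_nil_iff.1 h2
          rw [spell_nil_eq hL']
          right; rw [xword_eq, emb_nil, mul_one]
  -- main case : length ≥ 2
  have hlen2 : 2 ≤ w.length := by
    rcases w with _ | ⟨a, _ | ⟨b, w'⟩⟩ <;> simp_all
  have hm1 : 1 ≤ m := by omega
  ext g
  simp only [fencAux, dif_neg hw0, if_neg hw1, Set.mem_union, Set.mem_setOf_eq,
    Set.mem_singleton_iff]
  constructor
  · rintro (⟨s, t, hs, ht, rfl, p, hp, q, hq, rfl⟩ | rfl)
    · have hs1 : 0 < s.length := List.length_pos_iff.2 hs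
      have ht1 : 0 < t.length := List.length_pos_iff.2 ht
      have hlen : s.length + t.length ≤ m + 1 := by simpa using hwn
      rw [ih m (by omega) s (by omega)] at hp
      rw [ih m (by omega) t (by omega)] at hq
      obtain ⟨L, hL, rfl⟩ := hp
      obtain ⟨M, hM, rfl⟩ := hq
      exact ⟨L ++ M, spell_append hL hM, (emb_append L M).symm⟩
    · exact mem_Sset_x w hw0
  · rintro ⟨L, hL, rfl⟩
    rcases spell_cases hL with ⟨rfl, _⟩ | ⟨z, t, L', rfl, rfl, hL'⟩ | ⟨s, hs, t, L', rfl, rfl, hL'⟩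
    · exact absurd rfl hw0
    · have ht : t ≠ [] := by rintro rfl; simp at hw1
      left
      refine ⟨[z], t, by simp, ht, rfl, FreeGroup.of (Sum.inl z), ?_, emb L', ?_, (emb_cons _ _)⟩
      · rw [ih m (by omega) [z] (by simpa using hm1)]
        exact ⟨[Sum.inl z], Spell.letter z Spell.nil, rfl⟩
      · rw [ih m (by omega) t (by simp at hwn ⊢; omega)]
        exact ⟨L', hL', rfl⟩
    · by_cases ht : t = []
      · subst ht
        rw [spell_nil_eq hL']
        right
        rw [xGen_congr (List.append_nil s) (hs := hw0) (ht := hs),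
          show wordEmb (s ++ []) = wordEmb s from by rw [List.append_nil],
          ← xword_eq' s hs]
        simp
      · left
        have hs1 : 0 < s.length := List.length_pos_iff.2 hs
        have ht1 : 0 < t.length := List.length_pos_iff.2 ht
        have hlenst : s.length + t.length ≤ m + 1 := by simpa using hwn
        refine ⟨s, t, hs, ht, rfl, xGen s hs * wordEmb s, ?_, emb L', ?_, (xword_eq s hs L')⟩
        · rw [ih m (by omega) s (by omega)]
          exact mem_Sset_x s hs
        · rw [ih m (by omega) t (by omega)]
          exact ⟨L', hL', rfl⟩

lemma fenc_eq_Sset (w : List (Fin 4)) : fenc w = Sset w :=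
  fencAux_eq_Sset _ w le_rfl

lemma abIncl_append (w v : List (Fin 2)) : abIncl (w ++ v) = abIncl w ++ abIncl v :=
  List.map_append

lemma castLE_inj {a b : Fin 2} (h : (Fin.castLE (show 2 ≤ 4 by omega) a) = Fin.castLE (by omega) b) :
    a = b := by
  have := congrArg Fin.val h
  exact Fin.ext (by simpa using this)

lemma abIncl_split (w : List (Fin 2)) (t : List (Fin 4)) (r : List (Fin 2))
    (h : abIncl w ++ t = abIncl r) : ∃ v, r = w ++ v ∧ t = abIncl v := by
  induction w generalizing r with
  | nil => exact ⟨r, rfl, by simpa [abIncl] using h⟩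
  | cons a w ih =>
    rcases r with _ | ⟨b, r⟩
    · simp [abIncl] at h
    · simp only [abIncl, List.map_cons, List.cons_append, List.cons.injEq] at h
      obtain ⟨h1, h2⟩ := h
      obtain rfl := castLE_inj h1
      obtain ⟨v, rfl, rfl⟩ := ih r h2
      exact ⟨v, rfl, rfl⟩

lemma abIncl_split' (k : Fin 4) (hk : ∀ a : Fin 2, (Fin.castLE (show 2 ≤ 4 by omega) a) ≠ k)
    (w : List (Fin 2)) (t : List (Fin 4)) (r : List (Fin 2))
    (h : abIncl w ++ t = abIncl r ++ [k]) : ∃ v, r = w ++ v ∧ t = abIncl v ++ [k] := by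
  induction w generalizing r with
  | nil => exact ⟨r, rfl, by simpa [abIncl] using h⟩
  | cons a w ih =>
    rcases r with _ | ⟨b, r⟩
    · exfalso
      simp only [abIncl, List.map_cons, List.map_nil, List.cons_append, List.nil_append,
        List.cons.injEq] at h
      exact hk a h.1
    · simp only [abIncl, List.map_cons, List.cons_append, List.cons.injEq] at h
      obtain ⟨h1, h2⟩ := h
      obtain rfl := castLE_inj h1
      obtain ⟨v, rfl, rfl⟩ := ih r h2
      exact ⟨v, rfl, rfl⟩

lemma outline_shift (T : Set (List (Fin 2))) (w : List (Fin 2)) (t : List (Fin 4)) :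
    abIncl w ++ t ∈ outline T ↔ t ∈ outline {v | w ++ v ∈ T} := by
  constructor
  · rintro ((⟨r, hr, heq⟩ | ⟨r, hr, hr0, heq⟩) | ⟨r, hr, hr1, heq⟩)
    · obtain ⟨v, rfl, rfl⟩ := abIncl_split w t r heq.symm
      exact Or.inl (Or.inl ⟨v, hr, rfl⟩)
    · obtain ⟨v, rfl, rfl⟩ := abIncl_split' 2 (by decide) w t r heq
      refine Or.inl (Or.inr ⟨v, hr, ?_, rfl⟩)
      rwa [Set.mem_setOf_eq, ← List.append_assoc]
    · obtain ⟨v, rfl, rfl⟩ := abIncl_split' 3 (by decide) w t r heq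
      refine Or.inr ⟨v, hr, ?_, rfl⟩
      rwa [Set.mem_setOf_eq, ← List.append_assoc]
  · rintro ((⟨v, hv, rfl⟩ | ⟨v, hv, hv0, rfl⟩) | ⟨v, hv, hv1, rfl⟩)
    · exact Or.inl (Or.inl ⟨w ++ v, hv, abIncl_append w v⟩)
    · refine Or.inl (Or.inr ⟨w ++ v, hv, ?_, ?_⟩)
      · rwa [List.append_assoc]
      · rw [abIncl_append, List.append_assoc]
    · refine Or.inr ⟨w ++ v, hv, ?_, ?_⟩
      · rwa [List.append_assoc]
      · rw [abIncl_append, List.append_assoc]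

lemma mem_GTset {T : Set (List (Fin 2))} {g : FreeGroup FGen} :
    g ∈ GTset T ↔ ∃ u, u ∈ outline T ∧ g ∈ fenc u := by
  simp [GTset]

lemma GTset_pos {T : Set (List (Fin 2))} {g : FreeGroup FGen} (h : g ∈ GTset T) :
    ∃ M, g = emb M := by
  obtain ⟨u, _, hm⟩ := mem_GTset.1 h
  rw [fenc_eq_Sset] at hm
  obtain ⟨L, _, rfl⟩ := hm
  exact ⟨L, rfl⟩

lemma key (T : Set (List (Fin 2))) (w : List (Fin 2)) (hw' : abIncl w ≠ []) (g : FreeGroup FGen)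
    (M : List FGen) (hg : g = emb M)
    (h : xGen (abIncl w) hw' * g ∈ GTset T) :
    ∃ h', h' ∈ GTset {v | w ++ v ∈ T} ∧ g = wordEmb (abIncl w) * h' := by
  obtain ⟨u, hu, hmem⟩ := mem_GTset.1 h
  rw [fenc_eq_Sset] at hmem
  obtain ⟨L, hL, hLe⟩ := hmem
  have hthis : emb (Sum.inr ⟨abIncl w, hw'⟩ :: M) = emb L := by
    rw [emb_cons, ← hg]
    exact hLe
  have hLM : L = Sum.inr ⟨abIncl w, hw'⟩ :: M := (emb_injective hthis).symm
  subst hLM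
  rcases spell_cases hL with ⟨_, h2⟩ | ⟨z, t, L', h1, h2, _⟩ | ⟨s, hs, t, L', h1, h2, hL'⟩
  · simp at h2
  · simp at h2
  · rw [List.cons.injEq] at h2
    obtain ⟨h3, h4⟩ := h2
    obtain rfl : s = abIncl w := by
      have := congrArg (fun x => match x with | Sum.inr y => y.1 | Sum.inl _ => ([] : List (Fin 4))) h3
      exact this.symm
    refine ⟨emb L', ?_, ?_⟩
    · rw [mem_GTset]
      refine ⟨t, (outline_shift T w t).1 (h1 ▸ hu), ?_⟩
      rw [fenc_eq_Sset]
      exact ⟨L', hL', rfl⟩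
    · rw [hg, h4, emb_append, ← wordEmb_eq]

lemma GTset_mul (T : Set (List (Fin 2))) (w : List (Fin 2)) (hw' : abIncl w ≠ [])
    {h' : FreeGroup FGen} (hh : h' ∈ GTset {v | w ++ v ∈ T}) :
    wordEmb (abIncl w) * h' ∈ GTset T ∧
      xGen (abIncl w) hw' * (wordEmb (abIncl w) * h') ∈ GTset T := by
  obtain ⟨t, ht, hmem⟩ := mem_GTset.1 hh
  rw [fenc_eq_Sset] at hmem
  obtain ⟨L, hL, rfl⟩ := hmem
  have hu : abIncl w ++ t ∈ outline T := (outline_shift T w t).2 ht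
  constructor
  · refine mem_GTset.2 ⟨_, hu, ?_⟩
    rw [fenc_eq_Sset]
    exact ⟨(abIncl w).map Sum.inl ++ L, spell_word _ hL, by rw [emb_append, ← wordEmb_eq]⟩
  · refine mem_GTset.2 ⟨_, hu, ?_⟩
    rw [fenc_eq_Sset]
    exact ⟨Sum.inr ⟨abIncl w, hw'⟩ :: ((abIncl w).map Sum.inl ++ L),
      Spell.block _ hw' hL, by rw [xword_eq, mul_assoc]⟩


/-- For every `w ∈ {a,b}^{<ℕ}` and every nonempty tree `T` on `{a,b}`:
`G(T) ∩ x_w⁻¹ G(T) = w · G(T_w)`, and hence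
`w⁻¹ G(T) ∩ (x_w w)⁻¹ G(T) = G(T_w)`. -/
theorem GTset_intersection (T : Set (List (Fin 2)))
    (htree : ∀ u v : List (Fin 2), u <+: v → v ∈ T → u ∈ T)
    (hne : T.Nonempty)
    (w : List (Fin 2)) (hw : w ≠ []) (hw' : abIncl w ≠ []) :
    GTset T ∩ ((fun g => (xGen (abIncl w) hw')⁻¹ * g) '' GTset T) =
      (fun g => wordEmb (abIncl w) * g) '' GTset {v | w ++ v ∈ T} ∧
    ((fun g => (wordEmb (abIncl w))⁻¹ * g) '' GTset T) ∩
        ((fun g => (xGen (abIncl w) hw' * wordEmb (abIncl w))⁻¹ * g) '' GTset T) =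
      GTset {v | w ++ v ∈ T} := by
  constructor
  · ext g
    simp only [Set.mem_inter_iff, Set.mem_image]
    constructor
    · rintro ⟨hg1, k, hk, hkeq⟩
      have hxk : xGen (abIncl w) hw' * g ∈ GTset T := by
        rw [← hkeq, mul_inv_cancel_left]
        exact hk
      obtain ⟨M, hM⟩ := GTset_pos hg1
      obtain ⟨h', hh', rfl⟩ := key T w hw' g M hM hxk
      exact ⟨h', hh', rfl⟩
    · rintro ⟨h', hh', rfl⟩
      obtain ⟨m1, m2⟩ := GTset_mul T w hw' hh'
      exact ⟨m1, ⟨_, m2, by rw [inv_mul_cancel_left]⟩⟩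
  · ext h
    simp only [Set.mem_inter_iff, Set.mem_image]
    constructor
    · rintro ⟨⟨k1, hk1, he1⟩, ⟨k2, hk2, he2⟩⟩
      have hg1 : wordEmb (abIncl w) * h ∈ GTset T := by
        rw [← he1, mul_inv_cancel_left]
        exact hk1
      have hg2 : xGen (abIncl w) hw' * (wordEmb (abIncl w) * h) ∈ GTset T := by
        rw [← he2, ← mul_assoc, mul_inv_cancel_left]
        exact hk2
      obtain ⟨M, hM⟩ := GTset_pos hg1
      obtain ⟨h', hh', heq⟩ := key T w hw' _ M hM hg2
      obtain rfl : h = h' := mul_left_cancel heq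
      exact hh'
    · intro hh
      obtain ⟨m1, m2⟩ := GTset_mul T w hw' hh
      exact ⟨⟨_, m1, by rw [inv_mul_cancel_left]⟩, ⟨_, m2, by group⟩⟩
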